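/- Let N be a positive natural number. Any family of pairwise distinct nonzero vectors (αᵢ)_{i∈I} in ℕ^N such that every two distinct nonnegative integer combinations ∑ᵢ mᵢαᵢ and ∑ᵢ lᵢαᵢ (with m, l finitely supported, m ≠ l) yield distinct sums, has cardinality at most N. -/

import Mathlib

/-- A family of pairwise distinct nonzero vectors in ℕ^N such that distinct
finitely supported nonnegative integer combinations have distinct sums has
cardinality at most N. -/
theorem stmt3 (N : ℕ) (hN : 0 < N) {I : Type*} (α : I → (Fin N → ℕ))
    (hnz : ∀ i, α i ≠ 0)
    (hdist : Function.Injective α)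
    (hinj : Function.Injective
      (fun m : I →₀ ℕ => m.sum (fun i c => c • α i))) :
    Cardinal.mk I ≤ N := by
  set β : I → (Fin N → ℤ) := fun i j => (α i j : ℤ) with hβ
  -- cast hom
  let ι : (Fin N → ℕ) →+ (Fin N → ℤ) :=
    { toFun := fun v j => (v j : ℤ)
      map_zero' := by funext j; simp
      map_add' := by
        intro x y
        funext j
        show ((x j + y j : ℕ) : ℤ) = (x j : ℤ) + (y j : ℤ)
        push_cast
        ring }
  have hιinj : Function.Injective ι := by
    intro x y hxy
    funext j
    have h2 : ((x j : ℕ) : ℤ) = ((y j : ℕ) : ℤ) := congrFun hxy j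
    exact_mod_cast h2
  have hli : LinearIndependent ℤ β := by
    rw [linearIndependent_iff]
    intro l hl
    set a : I →₀ ℕ := l.mapRange Int.toNat (by simp) with ha
    set b : I →₀ ℕ := (-l).mapRange Int.toNat (by simp) with hb
    have hsa : ι (a.sum fun i c => c • α i) = l.sum fun i c => (c.toNat : ℤ) • β i := by
      rw [map_finsuppSum ι, ha, Finsupp.sum_mapRange_index (by intro i; simp)]
      refine Finsupp.sum_congr fun i _ => ?_
      funext j
      simp [β, ι]
    have hsb : ι (b.sum fun i c => c • α i) = l.sum fun i c => (((-c).toNat : ℤ)) • β i := by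
      rw [map_finsuppSum ι, hb, Finsupp.sum_mapRange_index (by intro i; simp),
        Finsupp.sum_neg_index (by intro i; simp)]
      refine Finsupp.sum_congr fun i _ => ?_
      funext j
      simp [β, ι]
    have hdiff : ι (a.sum fun i c => c • α i) - ι (b.sum fun i c => c • α i) = 0 := by
      rw [hsa, hsb, Finsupp.sum, Finsupp.sum, ← Finset.sum_sub_distrib]
      have : ∀ i ∈ l.support,
          ((l i).toNat : ℤ) • β i - (((-(l i)).toNat : ℤ)) • β i = l i • β i := by
        intro i _
        rw [← sub_smul]
        congr 1
        omega
      rw [Finset.sum_congr rfl this]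
      simpa [Finsupp.linearCombination_apply, Finsupp.sum] using hl
    have hab : a = b := by
      apply hinj
      exact hιinj (by simpa [sub_eq_zero] using hdiff)
    ext i
    have : a i = b i := by rw [hab]
    simp only [ha, hb, Finsupp.mapRange_apply, Finsupp.neg_apply] at this
    simp only [Finsupp.coe_zero, Pi.zero_apply]
    omega
  have hrank := hli.cardinal_lift_le_rank
  have hr : Module.rank ℤ (Fin N → ℤ) = N := by
    simp [rank_fun']
  rw [hr] at hrank
  have : Cardinal.lift.{0} (Cardinal.mk I) ≤ Cardinal.lift.{0} (N : Cardinal.{u_1}) := by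
    simpa using hrank
  exact Cardinal.lift_le.mp this
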